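/- Let n be a positive integer and let (n_1, ..., n_ℓ) be a composition of n into ℓ positive parts. Let (m_1, ..., m_ℓ) be positive integers with m_1 ≥ m_2 ≥ ... ≥ m_ℓ and n_i ≤ m_i for all i. For z ∈ {0, ..., n}, let U_z be the set of vectors (z_1, ..., z_ℓ) of nonnegative integers with z_i ≤ n_i for all i and z_1 + ... + z_ℓ = z. If j ∈ {1, ..., ℓ} and λ ∈ {0, ..., n_j − 1} are the unique integers satisfying z = n_1 + ... + n_{j−1} + λ, then max { m_1 z_1 + ... + m_ℓ z_ℓ : (z_1,...,z_ℓ) ∈ U_z } = m_1 n_1 + ... + m_{j−1} n_{j−1} + m_j λ. -/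
import Mathlib


/-- Maximizing a weighted sum over integer vectors bounded coordinatewise,
with weights sorted descendingly. -/
theorem stmt_0 (ℓ n : ℕ) (hℓ : 0 < ℓ) (nv mv : Fin ℓ → ℕ)
    (hnpos : ∀ i, 0 < nv i) (hmpos : ∀ i, 0 < mv i)
    (hsum : ∑ i, nv i = n)
    (hanti : ∀ i i' : Fin ℓ, i ≤ i' → mv i' ≤ mv i)
    (hnm : ∀ i, nv i ≤ mv i)
    (z : ℕ) (hz : z ≤ n)
    (j : Fin ℓ) (lam : ℕ) (hlam : lam < nv j)
    (hdec : z = (∑ i ∈ Finset.univ.filter (· < j), nv i) + lam) :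
    IsGreatest
      {S : ℕ | ∃ zv : Fin ℓ → ℕ, (∀ i, zv i ≤ nv i) ∧ (∑ i, zv i = z) ∧
        S = ∑ i, mv i * zv i}
      ((∑ i ∈ Finset.univ.filter (· < j), mv i * nv i) + mv j * lam) := by
  classical
  set g : Fin ℓ → ℕ := fun i => if i < j then nv i else if i = j then lam else 0 with hg
  have hkey : ∀ f : Fin ℓ → ℕ,
      ∑ i, f i * g i = (∑ i ∈ Finset.univ.filter (· < j), f i * nv i) + f j * lam := by
    intro f
    rw [← Finset.sum_filter_add_sum_filter_not Finset.univ (· < j) (fun i => f i * g i)]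
    congr 1
    · refine Finset.sum_congr rfl fun i hi => ?_
      simp only [Finset.mem_filter] at hi
      simp [hg, hi.2]
    · rw [Finset.sum_eq_single_of_mem j (by simp)]
      · simp [hg]
      · intro i hi hij
        simp only [Finset.mem_filter, Finset.mem_univ, true_and] at hi
        simp [hg, hi, hij]
  have hgle : ∀ i, g i ≤ nv i := by
    intro i
    simp only [hg]
    split
    · exact le_rfl
    · split
      · next h => exact h ▸ hlam.le
      · exact Nat.zero_le _
  have hgsum : ∑ i, g i = z := by
    have h := hkey (fun _ => 1)
    simp only [one_mul] at h
    rw [h, ← hdec]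
  constructor
  · exact ⟨g, hgle, hgsum, (hkey mv).symm⟩
  · rintro S ⟨zv, h1, h2, rfl⟩
    rw [← hkey mv]
    have hint : (∑ i, (mv i : ℤ) * zv i) ≤ ∑ i, (mv i : ℤ) * g i := by
      have key : ∑ i, (mv i : ℤ) * ((zv i : ℤ) - g i)
          ≤ ∑ i, (mv j : ℤ) * ((zv i : ℤ) - g i) := by
        refine Finset.sum_le_sum fun i _ => ?_
        rcases lt_trichotomy i j with hij | rfl | hij
        · have hc : (zv i : ℤ) - g i ≤ 0 := by
            simp only [hg, if_pos hij]
            have := h1 i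
            omega
          have hm : (mv j : ℤ) ≤ mv i := by exact_mod_cast hanti i j hij.le
          exact mul_le_mul_of_nonpos_right hm hc
        · exact le_rfl
        · have hc : (0 : ℤ) ≤ (zv i : ℤ) - g i := by
            have hz0 : g i = 0 := by simp [hg, asymm hij, hij.ne']
            rw [hz0]
            simp
          have hm : (mv i : ℤ) ≤ mv j := by exact_mod_cast hanti j i hij.le
          exact mul_le_mul_of_nonneg_right hm hc
      have hr : ∑ i, (mv j : ℤ) * ((zv i : ℤ) - g i) = 0 := by
        rw [← Finset.mul_sum, Finset.sum_sub_distrib]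
        have e1 : ∑ i, (zv i : ℤ) = z := by exact_mod_cast h2
        have e2 : ∑ i, (g i : ℤ) = z := by exact_mod_cast hgsum
        rw [e1, e2]; ring
      have h := key.trans hr.le
      simp only [mul_sub] at h
      rw [Finset.sum_sub_distrib] at h
      linarith
    exact_mod_cast hint
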